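/- Let v be a vertex of a graph and let z, w be neighbors of v. Suppose S' and S'' are two vertex orderings that induce the same relative order on V \ {v}, and in both orderings v is placed strictly between z and w with no other neighbor of v positioned between z and w. Then the first-fit colorings along S' and S'' are identical. -/

import Mathlib

open SimpleGraph

/-- First-fit coloring along a vertex sequence: each vertex in turn receives the
smallest positive integer not used on its already-colored neighbors. Uncolored
vertices have color `0`. -/
noncomputable def firstFit {V : Type*} [DecidableEq V] (G : SimpleGraph V) (l : List V) :
    V → ℕ :=
  l.foldl (fun c v => Function.update c v
    (sInf {k | 0 < k ∧ ∀ u, G.Adj v u → c u ≠ k})) (fun _ => 0)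

/-- `l` is an ordering of all vertices. -/
def IsOrdering {V : Type*} (l : List V) : Prop := l.Nodup ∧ ∀ v : V, v ∈ l

/-- `l` is a connected ordering: every vertex after the first has a neighbor earlier. -/
def IsConnectedOrdering {V : Type*} (G : SimpleGraph V) (l : List V) : Prop :=
  IsOrdering l ∧ ∀ i (hi : i < l.length), 0 < i → ∃ u ∈ l.take i, G.Adj u (l.get ⟨i, hi⟩)

/-- Number of colors used by first-fit along `l`. -/
noncomputable def numColors {V : Type*} [Fintype V] [DecidableEq V] (G : SimpleGraph V)
    (l : List V) : ℕ :=
  Finset.univ.sup (firstFit G l)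

/-- The Grundy number: maximum number of first-fit colors over all vertex orderings. -/
noncomputable def grundy {V : Type*} [Fintype V] [DecidableEq V] (G : SimpleGraph V) : ℕ :=
  sSup {k | ∃ l : List V, IsOrdering l ∧ k = numColors G l}

/-- The connected Grundy number: maximum number of first-fit colors over connected orderings. -/
noncomputable def connGrundy {V : Type*} [Fintype V] [DecidableEq V] (G : SimpleGraph V) : ℕ :=
  sSup {k | ∃ l : List V, IsConnectedOrdering G l ∧ k = numColors G l}

section Aux
variable {V : Type*} [DecidableEq V] (G : SimpleGraph V)

lemma mem_take_iff_indexOf_lt {l : List V} {i : ℕ} {u : V} (hu : u ∈ l) :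
    u ∈ l.take i ↔ l.idxOf u < i := by
  constructor
  · intro h
    calc l.idxOf u = (l.take i ++ l.drop i).idxOf u := by rw [List.take_append_drop]
    _ = (l.take i).idxOf u := List.idxOf_append_of_mem h
    _ < (l.take i).length := List.idxOf_lt_length_iff.2 h
    _ ≤ i := by simp [List.length_take]
  · intro h
    have hl : l.idxOf u < l.length := List.idxOf_lt_length_iff.2 hu
    have hlt : l.idxOf u < (l.take i).length := by simp [List.length_take]; omega
    have : (l.take i)[l.idxOf u] = u := by
      rw [List.getElem_take]; exact List.getElem_idxOf hl
    exact this ▸ List.getElem_mem hlt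

lemma foldl_apply_of_not_mem (c : V → ℕ) {l : List V} {x : V} (h : x ∉ l) :
    (l.foldl (fun c v => Function.update c v
      (sInf {k | 0 < k ∧ ∀ u, G.Adj v u → c u ≠ k})) c) x = c x := by
  induction l generalizing c with
  | nil => rfl
  | cons a l ih =>
    simp only [List.foldl_cons]
    rw [ih _ (fun hm => h (List.mem_cons_of_mem _ hm))]
    exact Function.update_of_ne (by rintro rfl; exact h (List.mem_cons_self)) _ _

lemma firstFit_append {l₁ l₂ : List V} {x : V} (h : x ∉ l₂) :
    firstFit G (l₁ ++ l₂) x = firstFit G l₁ x := by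
  unfold firstFit
  rw [List.foldl_append]
  exact foldl_apply_of_not_mem G _ h

lemma firstFit_of_not_mem {l : List V} {x : V} (h : x ∉ l) : firstFit G l x = 0 :=
  foldl_apply_of_not_mem G _ h

lemma firstFit_spec {l : List V} (hnd : l.Nodup) {x : V} (hx : x ∈ l) :
    firstFit G l x = sInf {k | 0 < k ∧ ∀ u, G.Adj x u →
      l.idxOf u < l.idxOf x → firstFit G l u ≠ k} := by
  set i := l.idxOf x with hi
  have hil : i < l.length := List.idxOf_lt_length_iff.2 hx
  have hdecomp : l = l.take i ++ x :: l.drop (i + 1) := by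
    conv_lhs => rw [← List.take_append_drop i l]
    congr 1
    rw [List.drop_eq_getElem_cons hil, List.getElem_idxOf hil]
  have hnd' : (l.take i ++ x :: l.drop (i + 1)).Nodup := hdecomp ▸ hnd
  have hxd : x ∉ l.drop (i + 1) :=
    (List.nodup_cons.mp (List.nodup_append.mp hnd').2.1).1
  have hdisj : (l.take i).Disjoint (x :: l.drop (i + 1)) :=
    fun a ha hb => (List.nodup_append.mp hnd').2.2 a ha a hb rfl
  have hval : ∀ u : V, l.idxOf u < i → firstFit G (l.take i) u = firstFit G l u := by
    intro u hu
    have humem : u ∈ l := List.idxOf_lt_length_iff.1 (hu.trans hil)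
    have hut : u ∈ l.take i := (mem_take_iff_indexOf_lt humem).2 hu
    have hnot : u ∉ x :: l.drop (i + 1) := fun hm => hdisj hut hm
    conv_rhs => rw [hdecomp]
    exact (firstFit_append G hnot).symm
  have hval0 : ∀ u : V, ¬ l.idxOf u < i → firstFit G (l.take i) u = 0 := by
    intro u hu
    refine firstFit_of_not_mem G fun hm => hu ?_
    exact (mem_take_iff_indexOf_lt ((l.take_sublist i).subset hm)).1 hm
  have key : firstFit G l x
      = sInf {k | 0 < k ∧ ∀ u, G.Adj x u → firstFit G (l.take i) u ≠ k} := by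
    conv_lhs => rw [hdecomp, show l.take i ++ x :: l.drop (i + 1)
      = (l.take i ++ [x]) ++ l.drop (i + 1) by simp]
    rw [firstFit_append G hxd]
    unfold firstFit
    rw [List.foldl_append]
    simp only [List.foldl_cons, List.foldl_nil]
    rw [Function.update_self]
  rw [key]
  congr 1
  ext k
  simp only [Set.mem_setOf_eq]
  constructor
  · rintro ⟨hk, h⟩
    exact ⟨hk, fun u hu hlt => (hval u hlt) ▸ h u hu⟩
  · rintro ⟨hk, h⟩
    refine ⟨hk, fun u hu => ?_⟩
    by_cases hlt : l.idxOf u < i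
    · rw [hval u hlt]; exact h u hu hlt
    · rw [hval0 u hlt]; exact hk.ne

end Aux

theorem stmt9 {V : Type*} [DecidableEq V] (G : SimpleGraph V) (v z w : V)
    (hz : G.Adj v z) (hw : G.Adj v w)
    (S' S'' : List V) (h1 : IsOrdering S') (h2 : IsOrdering S'')
    (hstable : ∀ a b : V, a ≠ v → b ≠ v →
      (S'.idxOf a < S'.idxOf b ↔ S''.idxOf a < S''.idxOf b))
    (hbetween' : S'.idxOf z < S'.idxOf v ∧ S'.idxOf v < S'.idxOf w)
    (hbetween'' : S''.idxOf z < S''.idxOf v ∧ S''.idxOf v < S''.idxOf w)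
    (hno' : ∀ u, G.Adj v u → ¬(S'.idxOf z < S'.idxOf u ∧ S'.idxOf u < S'.idxOf w))
    (hno'' : ∀ u, G.Adj v u → ¬(S''.idxOf z < S''.idxOf u ∧ S''.idxOf u < S''.idxOf w)) :
    firstFit G S' = firstFit G S'' := by
  obtain ⟨hnd', hmem'⟩ := h1
  obtain ⟨hnd'', hmem''⟩ := h2
  have hinj' : ∀ a b : V, S'.idxOf a = S'.idxOf b → a = b := fun a b h =>
    (List.idxOf_inj (hmem' a)).1 h
  have hinj'' : ∀ a b : V, S''.idxOf a = S''.idxOf b → a = b := fun a b h =>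
    (List.idxOf_inj (hmem'' a)).1 h
  have hzv : z ≠ v := hz.ne'
  have fact2dir : ∀ (A B : List V),
      (∀ a b : V, a ≠ v → b ≠ v → (A.idxOf a < A.idxOf b ↔ B.idxOf a < B.idxOf b)) →
      (A.idxOf z < A.idxOf v ∧ A.idxOf v < A.idxOf w) →
      (B.idxOf z < B.idxOf v ∧ B.idxOf v < B.idxOf w) →
      (∀ u, G.Adj v u → ¬(A.idxOf z < A.idxOf u ∧ A.idxOf u < A.idxOf w)) →
      ∀ u, G.Adj v u → A.idxOf u < A.idxOf v → B.idxOf u < B.idxOf v := by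
    intro A B hst hbA hbB hnoA u hu hlt
    have hune : u ≠ v := hu.ne'
    have hle : ¬ A.idxOf z < A.idxOf u := fun hc => hnoA u hu ⟨hc, hlt.trans hbA.2⟩
    have hle' : ¬ B.idxOf z < B.idxOf u := fun hc => hle ((hst z u hzv hune).2 hc)
    exact lt_of_le_of_lt (le_of_not_gt hle') hbB.1
  have fact2 : ∀ u : V, G.Adj v u →
      (S'.idxOf u < S'.idxOf v ↔ S''.idxOf u < S''.idxOf v) := fun u hu =>
    ⟨fact2dir S' S'' hstable hbetween' hbetween'' hno' u hu,
     fact2dir S'' S' (fun a b ha hb => (hstable a b ha hb).symm) hbetween'' hbetween' hno'' u hu⟩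
  have fact3dir : ∀ (A B : List V),
      (∀ a b : V, a ≠ v → b ≠ v → (A.idxOf a < A.idxOf b ↔ B.idxOf a < B.idxOf b)) →
      (A.idxOf z < A.idxOf v ∧ A.idxOf v < A.idxOf w) →
      (B.idxOf z < B.idxOf v ∧ B.idxOf v < B.idxOf w) →
      (∀ u, G.Adj v u → ¬(A.idxOf z < A.idxOf u ∧ A.idxOf u < A.idxOf w)) →
      (∀ a b : V, A.idxOf a = A.idxOf b → a = b) →
      ∀ x, G.Adj v x → A.idxOf v < A.idxOf x → B.idxOf v < B.idxOf x := by
    intro A B hst hbA hbB hnoA hinjA x hx hlt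
    have hxz : A.idxOf z < A.idxOf x := hbA.1.trans hlt
    have hwx : A.idxOf w ≤ A.idxOf x := le_of_not_gt (fun hc => hnoA x hx ⟨hxz, hc⟩)
    rcases eq_or_lt_of_le hwx with heq | hwlt
    · have hwe : w = x := hinjA _ _ heq
      exact hwe ▸ hbB.2
    · exact hbB.2.trans ((hst w x hw.ne' hx.ne').1 hwlt)
  have fact3 : ∀ x : V, G.Adj v x →
      (S'.idxOf v < S'.idxOf x ↔ S''.idxOf v < S''.idxOf x) := fun x hx =>
    ⟨fact3dir S' S'' hstable hbetween' hbetween'' hno' hinj' x hx,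
     fact3dir S'' S' (fun a b ha hb => (hstable a b ha hb).symm) hbetween'' hbetween' hno''
       hinj'' x hx⟩
  have equiv : ∀ x u : V, G.Adj x u →
      (S'.idxOf u < S'.idxOf x ↔ S''.idxOf u < S''.idxOf x) := by
    intro x u hadj
    by_cases hxv : x = v
    · subst hxv; exact fact2 u hadj
    · by_cases huv : u = v
      · subst huv; exact fact3 x hadj.symm
      · exact hstable u x huv hxv
  suffices H : ∀ n (x : V), S'.idxOf x = n → firstFit G S' x = firstFit G S'' x by
    exact funext fun x => H _ x rfl
  intro n
  induction n using Nat.strong_induction_on with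
  | _ n ih =>
    intro x hxn
    have IH : ∀ u, S'.idxOf u < S'.idxOf x → firstFit G S' u = firstFit G S'' u :=
      fun u hu => ih _ (hxn ▸ hu) u rfl
    rw [firstFit_spec G hnd' (hmem' x), firstFit_spec G hnd'' (hmem'' x)]
    congr 1
    ext k
    simp only [Set.mem_setOf_eq]
    constructor
    · rintro ⟨hk, h⟩
      refine ⟨hk, fun u hu hlt => ?_⟩
      have hlt' : S'.idxOf u < S'.idxOf x := (equiv x u hu).2 hlt
      rw [← IH u hlt']; exact h u hu hlt'
    · rintro ⟨hk, h⟩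
      refine ⟨hk, fun u hu hlt => ?_⟩
      rw [IH u hlt]; exact h u hu ((equiv x u hu).1 hlt)
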